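/- For the 3x+1 mapping T, possible cycles of positive integers require λ < 1 and cycles of negative integers require λ > 1: let n be a nonzero integer and k a natural number with T^(k)(n) = n; let k₁ be the number of indices i < k with T^(i)(n) odd, k₂ = k - k₁, and λ = (3/2)^{k₁}·(1/2)^{k₂} ∈ ℚ; if k₁ ≥ 1 and n > 0 then λ < 1, and if k₁ ≥ 1 and n < 0 then λ > 1. -/
import Mathlib


/-- The `3x+1` mapping. -/
def T (n : ℤ) : ℤ := if n % 2 = 0 then n / 2 else (3 * n + 1) / 2

lemma T_key (n : ℤ) : ∀ k : ℕ, ∃ c : ℤ, 0 ≤ c ∧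
    (1 ≤ ((Finset.range k).filter fun i => T^[i] n % 2 = 1).card → 1 ≤ c) ∧
    2 ^ k * T^[k] n =
      3 ^ (((Finset.range k).filter fun i => T^[i] n % 2 = 1).card) * n + c := by
  intro k
  induction k with
  | zero => exact ⟨0, le_refl 0, by simp, by simp⟩
  | succ k ih =>
    obtain ⟨c, hc0, hc1, hc⟩ := ih
    set m := T^[k] n with hm
    have hit : T^[k+1] n = T m := by rw [Function.iterate_succ_apply']
    rcases Int.emod_two_eq m with he | ho
    · -- even step
      have hfilter : ((Finset.range (k+1)).filter fun i => T^[i] n % 2 = 1) =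
          ((Finset.range k).filter fun i => T^[i] n % 2 = 1) := by
        rw [Finset.range_add_one, Finset.filter_insert]
        simp [← hm, he]
      refine ⟨c, hc0, ?_, ?_⟩
      · rw [hfilter]; exact hc1
      · have hT : T m = m / 2 := by simp [T, he]
        have h2 : 2 * (m / 2) = m := by
          omega
        rw [hfilter, hit, hT, pow_succ, mul_comm (2^k) 2, mul_assoc,
          show (2:ℤ) * (2^k * (m/2)) = 2^k * (2 * (m/2)) by ring, h2, hc]
    · -- odd step
      have hfilter : ((Finset.range (k+1)).filter fun i => T^[i] n % 2 = 1) =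
          insert k ((Finset.range k).filter fun i => T^[i] n % 2 = 1) := by
        rw [Finset.range_add_one, Finset.filter_insert]
        simp [← hm, ho]
      have hknotin : k ∉ ((Finset.range k).filter fun i => T^[i] n % 2 = 1) := by
        simp
      have hcard : ((Finset.range (k+1)).filter fun i => T^[i] n % 2 = 1).card =
          ((Finset.range k).filter fun i => T^[i] n % 2 = 1).card + 1 := by
        rw [hfilter, Finset.card_insert_of_notMem hknotin]
      refine ⟨3 * c + 2 ^ k, by positivity, fun _ => by nlinarith [pow_pos (show (0:ℤ)<2 by norm_num) k], ?_⟩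
      have hT : T m = (3 * m + 1) / 2 := by simp [T, ho]
      have h2 : 2 * ((3 * m + 1) / 2) = 3 * m + 1 := by omega
      rw [hcard, hit, hT, pow_succ,
        show (2:ℤ)^k * 2 * ((3*m+1)/2) = 2^k * (2 * ((3*m+1)/2)) by ring, h2,
        show (2:ℤ)^k * (3*m+1) = 3 * (2^k * m) + 2^k by ring, hc]
      ring

/-- For cycles of the `3x+1` mapping with at least one odd step: positive cycles
force `λ < 1` and negative cycles force `λ > 1`, where `λ = (3/2)^k₁ (1/2)^k₂`,
`k₁` counting the odd iterates among the first `k` and `k₂ = k - k₁`. -/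
theorem cycle_lambda_sign (n : ℤ) (hn : n ≠ 0) (k : ℕ) (hcyc : T^[k] n = n)
    (k₁ k₂ : ℕ)
    (hk₁ : k₁ = ((Finset.range k).filter fun i => T^[i] n % 2 = 1).card)
    (hk₂ : k₂ = k - k₁) (hk₁pos : 1 ≤ k₁) :
    (0 < n → (3 / 2 : ℚ) ^ k₁ * (1 / 2 : ℚ) ^ k₂ < 1) ∧
    (n < 0 → 1 < (3 / 2 : ℚ) ^ k₁ * (1 / 2 : ℚ) ^ k₂) := by
  obtain ⟨c, hc0, hc1, hc⟩ := T_key n k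
  rw [hcyc, ← hk₁] at hc
  have hcpos : 1 ≤ c := hc1 (hk₁ ▸ hk₁pos)
  have hkle : k₁ ≤ k := by
    rw [hk₁]
    exact le_trans (Finset.card_filter_le _ _) (by simp)
  have hksum : k = k₁ + k₂ := by omega
  have hmain : (2:ℤ)^k * n - 3^k₁ * n = c := by linarith [hc]
  have hlam : (3 / 2 : ℚ) ^ k₁ * (1 / 2 : ℚ) ^ k₂ = (3:ℚ)^k₁ / 2^k := by
    rw [hksum, div_pow, div_pow, one_pow, pow_add]
    field_simp
  constructor
  · intro hnpos
    have h23 : (3:ℤ)^k₁ < 2^k := by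
      nlinarith [hmain, hcpos]
    rw [hlam, div_lt_one (by positivity)]
    exact_mod_cast h23
  · intro hnneg
    have h23 : (2:ℤ)^k < 3^k₁ := by
      nlinarith [hmain, hcpos]
    rw [hlam, lt_div_iff₀ (by positivity), one_mul]
    exact_mod_cast h23
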